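/- Let k ≥ 3 and let P_k ⊆ ((F_2^k \ {0}) → F_2) be the puncture at the coordinate 0 of the Reed–Muller code R(k−3,k), i.e., P_k = { w : (F_2^k \ {0}) → F_2 | ∃ f ∈ F_2[x_1,…,x_k] with total degree ≤ k−3 such that w(v) = f(v) for all nonzero v }. Then the covering radius of P_k equals k+1 if k is even and equals k if k is odd. -/

import Mathlib

namespace RM7
open Finset Matrix
variable {k : ℕ}
abbrev V (k : ℕ) := Fin k → ZMod 2
abbrev Pt (k : ℕ) := {v : Fin k → ZMod 2 // v ≠ 0}

lemma z2_add_self (a : ZMod 2) : a + a = 0 := by revert a; decide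
lemma z2_mul_self (a : ZMod 2) : a * a = a := by revert a; decide

def outer (v : V k) : Matrix (Fin k) (Fin k) (ZMod 2) := Matrix.vecMulVec v v

def synF (S : Finset (Pt k)) : Matrix (Fin k) (Fin k) (ZMod 2) := ∑ v ∈ S, outer v.1

lemma synF_apply (S : Finset (Pt k)) (i j : Fin k) :
    synF S i j = ∑ v ∈ S, v.1 i * v.1 j := by
  simp [synF, outer, Matrix.vecMulVec, Matrix.sum_apply]

lemma mat_add_self (M : Matrix (Fin k) (Fin k) (ZMod 2)) : M + M = 0 := by
  ext s t; simp only [Matrix.add_apply, Matrix.zero_apply]; exact z2_add_self _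

lemma outer_zero : outer (0 : V k) = 0 := by
  ext s t; simp [outer, Matrix.vecMulVec_apply]

/-- the A = 0 base case of the alternating induction -/
lemma alt_zero_case (T : Finset (Fin k)) (c : V k) :
    ∃ S : Finset (Pt k), synF S = outer c ∧
      (∀ v ∈ S, ∀ i, i ∉ T → v.1 i = c i) ∧ S.card ≤ 1 := by
  by_cases hc0 : c = 0
  · exact ⟨∅, by simp [synF, hc0, outer_zero], by simp, by simp⟩
  · refine ⟨{⟨c, hc0⟩}, by simp [synF], ?_, by simp⟩
    intro v hv i _
    simp only [Finset.mem_singleton] at hv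
    rw [hv]

/-- main ZMod 2 identity for the symplectic elimination step -/
lemma z2_main (a cs ct us ut ws wt : ZMod 2) :
    (cs + us) * (ct + ut) + ((cs + ws) * (ct + wt) +
      ((a + us * wt + ws * ut) + (cs + us + ws) * (ct + ut + wt))) = a + cs * ct := by
  revert a cs ct us ut ws wt; decide

/-- The alternating-phase induction. -/
lemma alt_lemma : ∀ (n : ℕ) (T : Finset (Fin k)), T.card ≤ n →
    ∀ (A : Matrix (Fin k) (Fin k) (ZMod 2)),
    (∀ i j, A i j = A j i) →
    (∀ i, A i i = 0) →
    (∀ i, i ∉ T → ∀ j, A i j = 0) →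
    ∀ (c : V k), (c = 0 ∨ ∃ i, i ∉ T ∧ c i ≠ 0) →
    ∃ S : Finset (Pt k),
      synF S = A + outer c ∧
      (∀ v ∈ S, ∀ i, i ∉ T → v.1 i = c i) ∧
      S.card ≤ T.card + 1 ∧
      (Odd T.card → S.card ≤ T.card) := by
  intro n
  induction n with
  | zero =>
    intro T hTn A hsym hdiag hrows c hc
    have hT : T = ∅ := Finset.card_eq_zero.mp (Nat.le_zero.mp hTn)
    have hA : A = 0 := by
      ext s t; exact hrows s (by simp [hT]) t
    obtain ⟨S, h1, h2, h3⟩ := alt_zero_case T c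
    exact ⟨S, by rw [hA, zero_add]; exact h1, h2, le_trans h3 (by omega),
      fun hodd => le_trans h3 hodd.pos⟩
  | succ n ih =>
    intro T hTn A hsym hdiag hrows c hc
    by_cases hA : A = 0
    · obtain ⟨S, h1, h2, h3⟩ := alt_zero_case T c
      exact ⟨S, by rw [hA, zero_add]; exact h1, h2, le_trans h3 (by omega),
        fun hodd => le_trans h3 hodd.pos⟩
    · -- find a pivot entry A i j = 1
      have hex : ∃ i j, A i j ≠ 0 := by
        by_contra hcon
        push_neg at hcon
        exact hA (by ext s t; exact hcon s t)
      obtain ⟨i, j, hij0⟩ := hex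
      have hij1 : A i j = 1 := by
        have : ∀ a : ZMod 2, a ≠ 0 → a = 1 := by decide
        exact this _ hij0
      have hij : i ≠ j := by
        intro h; rw [h] at hij1; rw [hdiag j] at hij1; exact zero_ne_one hij1
      have hiT : i ∈ T := by
        by_contra h; rw [hrows i h j] at hij1; exact zero_ne_one hij1
      have hjT : j ∈ T := by
        by_contra h
        have := hrows j h i
        rw [hsym i j] at hij1
        rw [this] at hij1; exact zero_ne_one hij1
      set u : V k := fun s => A s i with hu
      set w : V k := fun s => A s j with hw
      have hui : u i = 0 := hdiag i
      have huj : u j = 1 := by rw [hu]; show A j i = 1; rw [← hsym i j]; exact hij1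
      have hwi : w i = 1 := hij1
      have hwj : w j = 0 := hdiag j
      set T' : Finset (Fin k) := (T.erase i).erase j with hT'
      have hiT' : i ∉ T' := fun hmem =>
        Finset.notMem_erase i T ((Finset.mem_erase.mp hmem).2)
      have hjT' : j ∉ T' := Finset.notMem_erase j _
      have hT'sub : T' ⊆ T := subset_trans (Finset.erase_subset _ _) (Finset.erase_subset _ _)
      have hjTi : j ∈ T.erase i := Finset.mem_erase.mpr ⟨hij.symm, hjT⟩
      have hT'card : T'.card = T.card - 2 := by
        rw [hT', Finset.card_erase_of_mem hjTi, Finset.card_erase_of_mem hiT]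
        omega
      have hTcard2 : 2 ≤ T.card := by
        have : ({i, j} : Finset (Fin k)) ⊆ T := by
          intro x hx; simp only [Finset.mem_insert, Finset.mem_singleton] at hx
          rcases hx with h | h
          · rw [h]; exact hiT
          · rw [h]; exact hjT
        calc 2 = ({i, j} : Finset (Fin k)).card := (Finset.card_pair hij).symm
          _ ≤ T.card := Finset.card_le_card this
      set A' : Matrix (Fin k) (Fin k) (ZMod 2) :=
        A + Matrix.vecMulVec u w + Matrix.vecMulVec w u with hA'
      have hA'app : ∀ s t, A' s t = A s t + u s * w t + w s * u t := by
        intro s t; simp [hA', Matrix.add_apply, Matrix.vecMulVec_apply]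
      have hrows_uv : ∀ s, s ∉ T → u s = 0 ∧ w s = 0 := by
        intro s hs; exact ⟨hrows s hs i, hrows s hs j⟩
      have hsym' : ∀ s t, A' s t = A' t s := by
        intro s t; rw [hA'app, hA'app, hsym s t]; ring
      have hdiag' : ∀ s, A' s s = 0 := by
        intro s; rw [hA'app, hdiag s, zero_add, mul_comm]; exact z2_add_self _
      have hrows' : ∀ s, s ∉ T' → ∀ t, A' s t = 0 := by
        intro s hs t
        by_cases hsT : s ∈ T
        · -- then s = i or s = j
          have hsij : s = i ∨ s = j := by
            by_contra hcon
            push_neg at hcon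
            exact hs (by simp [hT', Finset.mem_erase, hcon.1, hcon.2, hsT])
          rcases hsij with h | h
          · subst h
            rw [hA'app, hui, hwi, zero_mul, add_zero, one_mul, hu]
            show A s t + A t s = 0
            rw [hsym s t]; exact z2_add_self _
          · subst h
            rw [hA'app, huj, hwj, zero_mul, add_zero, one_mul, hw]
            show A s t + A t s = 0
            rw [hsym s t]; exact z2_add_self _
        · obtain ⟨h1, h2⟩ := hrows_uv s hsT
          rw [hA'app, hrows s hsT t, h1, h2, zero_mul, zero_mul]; ring
      -- new accumulator
      set c' : V k := c + u + w with hc'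
      have hc'i : c' i = c i + 1 := by
        rw [hc']; simp only [Pi.add_apply]; rw [hui, hwi]; ring
      have hc'j : c' j = c j + 1 := by
        rw [hc']; simp only [Pi.add_apply]; rw [huj, hwj]; ring
      have hcnew : c' = 0 ∨ ∃ s, s ∉ T' ∧ c' s ≠ 0 := by
        right
        rcases hc with h0 | ⟨i₀, hi₀T, hi₀⟩
        · exact ⟨i, hiT', by rw [hc'i, h0]; simp⟩
        · refine ⟨i₀, fun hmem => hi₀T (hT'sub hmem), ?_⟩
          obtain ⟨h1, h2⟩ := hrows_uv i₀ hi₀T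
          rw [hc']; simp only [Pi.add_apply]; rw [h1, h2, add_zero, add_zero]; exact hi₀
      obtain ⟨S'', hsum'', hinv'', hcard'', hodd''⟩ :=
        ih T' (by omega) A' hsym' hdiag' hrows' c' hcnew
      -- the two new vectors
      have hx1ne : (c + u : V k) ≠ 0 := by
        rcases hc with h0 | ⟨i₀, hi₀T, hi₀⟩
        · intro hcon
          have := congrFun hcon j
          rw [h0] at this
          simp only [Pi.add_apply, Pi.zero_apply, zero_add] at this
          rw [huj] at this; exact one_ne_zero this
        · intro hcon
          have := congrFun hcon i₀
          simp only [Pi.add_apply, Pi.zero_apply] at this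
          rw [(hrows_uv i₀ hi₀T).1, add_zero] at this; exact hi₀ this
      have hx2ne : (c + w : V k) ≠ 0 := by
        rcases hc with h0 | ⟨i₀, hi₀T, hi₀⟩
        · intro hcon
          have := congrFun hcon i
          rw [h0] at this
          simp only [Pi.add_apply, Pi.zero_apply, zero_add] at this
          rw [hwi] at this; exact one_ne_zero this
        · intro hcon
          have := congrFun hcon i₀
          simp only [Pi.add_apply, Pi.zero_apply] at this
          rw [(hrows_uv i₀ hi₀T).2, add_zero] at this; exact hi₀ this
      set x1 : Pt k := ⟨c + u, hx1ne⟩ with hx1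
      set x2 : Pt k := ⟨c + w, hx2ne⟩ with hx2
      have hS''i : ∀ v ∈ S'', v.1 i = c i + 1 := by
        intro v hv; rw [hinv'' v hv i hiT', hc'i]
      have hS''j : ∀ v ∈ S'', v.1 j = c j + 1 := by
        intro v hv; rw [hinv'' v hv j hjT', hc'j]
      have hx2S : x2 ∉ S'' := by
        intro hmem
        have h := hS''j x2 hmem
        simp only [hx2, Pi.add_apply] at h
        rw [hwj] at h
        exact zero_ne_one (add_left_cancel h)
      have hx1x2 : x1 ≠ x2 := by
        intro hcon
        have h0 : (c + u : V k) = c + w := congrArg Subtype.val hcon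
        have h := congrFun h0 i
        simp only [Pi.add_apply] at h
        rw [hui, hwi] at h
        exact zero_ne_one (add_left_cancel h)
      have hx1S : x1 ∉ insert x2 S'' := by
        intro hmem
        rcases Finset.mem_insert.mp hmem with h | h
        · exact hx1x2 h
        · have h2 := hS''i x1 h
          simp only [hx1, Pi.add_apply] at h2
          rw [hui] at h2
          exact zero_ne_one (add_left_cancel h2)
      refine ⟨insert x1 (insert x2 S''), ?_, ?_, ?_, ?_⟩
      · -- the sum
        rw [synF, Finset.sum_insert hx1S, Finset.sum_insert hx2S]
        show outer x1.1 + (outer x2.1 + synF S'') = A + outer c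
        rw [hsum'']
        ext s t
        simp only [Matrix.add_apply, outer, Matrix.vecMulVec_apply, hx1, hx2, hc',
          Pi.add_apply, hA'app]
        have hz := z2_main (A s t) (c s) (c t) (u s) (u t) (w s) (w t)
        linear_combination hz
      · intro v hv i₀ hi₀T
        obtain ⟨h1, h2⟩ := hrows_uv i₀ hi₀T
        rcases Finset.mem_insert.mp hv with h | h
        · rw [h]; simp only [hx1, Pi.add_apply]; rw [h1, add_zero]
        rcases Finset.mem_insert.mp h with h' | h'
        · rw [h']; simp only [hx2, Pi.add_apply]; rw [h2, add_zero]
        · rw [hinv'' v h' i₀ (fun hmem => hi₀T (hT'sub hmem)), hc']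
          simp only [Pi.add_apply]; rw [h1, h2, add_zero, add_zero]
      · have h1 := Finset.card_insert_le x1 (insert x2 S'')
        have h2 := Finset.card_insert_le x2 S''
        omega
      · intro hodd
        have hodd' : Odd T'.card := by
          rcases hodd with ⟨m, hm⟩
          exact ⟨m - 1, by omega⟩
        have h3 := hodd'' hodd'
        have h1 := Finset.card_insert_le x1 (insert x2 S'')
        have h2 := Finset.card_insert_le x2 S''
        omega

/-- Gram-phase induction. -/
lemma gram_lemma : ∀ (n : ℕ) (T : Finset (Fin k)), T.card ≤ n →
    ∀ (A : Matrix (Fin k) (Fin k) (ZMod 2)),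
    (∀ i j, A i j = A j i) →
    (∀ i, i ∉ T → ∀ j, A i j = 0) →
    ∃ S : Finset (Pt k),
      synF S = A ∧
      (∀ v ∈ S, ∀ i, i ∉ T → v.1 i = 0) ∧
      S.card ≤ T.card + 1 ∧
      ((Odd T.card ∨ ∃ i, A i i ≠ 0) → S.card ≤ T.card) := by
  intro n
  induction n with
  | zero =>
    intro T hTn A hsym hrows
    have hT : T = ∅ := Finset.card_eq_zero.mp (Nat.le_zero.mp hTn)
    have hA : A = 0 := by ext s t; exact hrows s (by simp [hT]) t
    exact ⟨∅, by simp [synF, hA], by simp, by simp, by simp⟩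
  | succ n ih =>
    intro T hTn A hsym hrows
    by_cases hd : ∃ i, A i i ≠ 0
    · obtain ⟨i, hAii⟩ := hd
      have hAii1 : A i i = 1 := by
        have : ∀ a : ZMod 2, a ≠ 0 → a = 1 := by decide
        exact this _ hAii
      have hiT : i ∈ T := by
        by_contra h; rw [hrows i h i] at hAii1; exact zero_ne_one hAii1
      set χ : V k := fun s => A s i with hχ
      have hχi : χ i = 1 := hAii1
      have hχne : χ ≠ 0 := by
        intro hcon
        have := congrFun hcon i
        rw [hχi] at this; exact one_ne_zero this
      set T' : Finset (Fin k) := T.erase i with hT'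
      have hiT' : i ∉ T' := Finset.notMem_erase i T
      have hT'sub : T' ⊆ T := Finset.erase_subset _ _
      have hT'card : T'.card = T.card - 1 := Finset.card_erase_of_mem hiT
      have hTpos : 1 ≤ T.card := Finset.card_pos.mpr ⟨i, hiT⟩
      set A' : Matrix (Fin k) (Fin k) (ZMod 2) := A + outer χ with hA'
      have hA'app : ∀ s t, A' s t = A s t + χ s * χ t := by
        intro s t; simp [hA', outer, Matrix.add_apply, Matrix.vecMulVec_apply]
      have hχrows : ∀ s, s ∉ T → χ s = 0 := fun s hs => hrows s hs i
      have hsym' : ∀ s t, A' s t = A' t s := by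
        intro s t; rw [hA'app, hA'app, hsym s t]; ring
      have hrows' : ∀ s, s ∉ T' → ∀ t, A' s t = 0 := by
        intro s hs t
        by_cases hsT : s ∈ T
        · have hsi : s = i := by
            by_contra hcon
            exact hs (Finset.mem_erase.mpr ⟨hcon, hsT⟩)
          subst hsi
          rw [hA'app, hχi, one_mul, hχ]
          show A s t + A t s = 0
          rw [hsym s t]; exact z2_add_self _
        · rw [hA'app, hrows s hsT t, hχrows s hsT, zero_mul, add_zero]
      have hcancel : A' + outer χ = A := by
        rw [hA', add_assoc, mat_add_self, add_zero]
      by_cases halt : ∀ s, A' s s = 0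
      · obtain ⟨S, hsum, hinv, hcard, _⟩ :=
          alt_lemma T'.card T' le_rfl A' hsym' halt hrows' χ
            (Or.inr ⟨i, hiT', by rw [hχi]; exact one_ne_zero⟩)
        refine ⟨S, ?_, ?_, ?_, ?_⟩
        · rw [hsum, hcancel]
        · intro v hv s hs
          rw [hinv v hv s (fun hmem => hs (hT'sub hmem))]
          exact hχrows s hs
        · omega
        · intro _; omega
      · push_neg at halt
        obtain ⟨S', hsum', hinv', hcard', hcond'⟩ := ih T' (by omega) A' hsym' hrows'
        have hS'card : S'.card ≤ T'.card := hcond' (Or.inr halt)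
        set x : Pt k := ⟨χ, hχne⟩ with hx
        have hxS' : x ∉ S' := by
          intro hmem
          have := hinv' x hmem i hiT'
          simp only [hx] at this
          rw [hχi] at this
          exact one_ne_zero this
        refine ⟨insert x S', ?_, ?_, ?_, ?_⟩
        · rw [synF, Finset.sum_insert hxS']
          show outer x.1 + synF S' = A
          rw [hsum']
          simp only [hx]
          rw [add_comm]
          exact hcancel
        · intro v hv s hs
          rcases Finset.mem_insert.mp hv with h | h
          · rw [h]; exact hχrows s hs
          · exact hinv' v h s (fun hmem => hs (hT'sub hmem))
        · have := Finset.card_insert_le x S'; omega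
        · intro _
          have := Finset.card_insert_le x S'; omega
    · push_neg at hd
      by_cases hA : A = 0
      · exact ⟨∅, by simp [synF, hA], by simp, by simp, by simp⟩
      · obtain ⟨S, hsum, hinv, hcard, hodd⟩ :=
          alt_lemma T.card T le_rfl A hsym hd hrows 0 (Or.inl rfl)
        refine ⟨S, by rw [hsum, outer_zero, add_zero], ?_, hcard, ?_⟩
        · intro v hv s hs
          exact hinv v hv s hs
        · rintro (h | h)
          · exact hodd h
          · obtain ⟨i, hi⟩ := h
            exact absurd (hd i) hi

/-- Combinatorial upper bound: every symmetric matrix over `F₂` is the sum of at most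
`k+1` (`k` even) resp. `k` (`k` odd) distinct nonzero rank-one symmetric matrices. -/
lemma upper_bound (A : Matrix (Fin k) (Fin k) (ZMod 2)) (hsym : ∀ i j, A i j = A j i) :
    ∃ S : Finset (Pt k), synF S = A ∧ S.card ≤ (if Even k then k + 1 else k) := by
  obtain ⟨S, hsum, _, hcard, hcond⟩ :=
    gram_lemma (Finset.univ : Finset (Fin k)).card Finset.univ le_rfl A hsym
      (fun i hi _ => absurd (Finset.mem_univ i) hi)
  have hcu : (Finset.univ : Finset (Fin k)).card = k := by simp
  by_cases hev : Even k
  · exact ⟨S, hsum, by rw [if_pos hev]; omega⟩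
  · refine ⟨S, hsum, ?_⟩
    rw [if_neg hev]
    have : Odd (Finset.univ : Finset (Fin k)).card := by
      rw [hcu]; exact Nat.odd_iff.mpr (Nat.not_even_iff.mp hev)
    have := hcond (Or.inl this)
    omega

lemma synF_mulVec (S : Finset (Pt k)) (y : V k) :
    synF S *ᵥ y = ∑ v ∈ S, (v.1 ⬝ᵥ y) • v.1 := by
  funext s
  simp only [Matrix.mulVec, dotProduct, synF_apply, Finset.sum_apply,
    Pi.smul_apply, smul_eq_mul, Finset.sum_mul]
  rw [Finset.sum_comm]
  apply Finset.sum_congr rfl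
  intro v _
  apply Finset.sum_congr rfl
  intro t _
  ring

/-- If `synF S = A` with `A` invertible via `A * A = 1` then `S` spans. -/
lemma span_of_synF (S : Finset (Pt k)) (A : Matrix (Fin k) (Fin k) (ZMod 2))
    (hsum : synF S = A) (hAA : A * A = 1) :
    Submodule.span (ZMod 2) (↑(S.image (fun v : Pt k => v.1)) : Set (V k)) = ⊤ := by
  apply le_antisymm le_top
  intro y _
  have hy : A *ᵥ (A *ᵥ y) = y := by
    rw [Matrix.mulVec_mulVec, hAA, Matrix.one_mulVec]
  rw [← hy, ← hsum, synF_mulVec]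
  apply Submodule.sum_mem
  intro v hv
  apply Submodule.smul_mem
  apply Submodule.subset_span
  simp only [Finset.coe_image, Set.mem_image, Finset.mem_coe]
  exact ⟨v, hv, rfl⟩

lemma card_lower_of_span (S : Finset (Pt k))
    (hspan : Submodule.span (ZMod 2) (↑(S.image (fun v : Pt k => v.1)) : Set (V k)) = ⊤) :
    k ≤ S.card := by
  have h1 : Module.finrank (ZMod 2) (V k) = k := by
    rw [Module.finrank_pi]; simp
  have h2 : (↑(S.image (fun v : Pt k => v.1)) : Set (V k)).finrank (ZMod 2)
      ≤ (S.image (fun v : Pt k => v.1)).card := finrank_span_finset_le_card _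
  rw [Set.finrank, hspan, finrank_top, h1] at h2
  have h3 : (S.image (fun v : Pt k => v.1)).card = S.card :=
    Finset.card_image_of_injective _ Subtype.val_injective
  omega

lemma lower_card_base (S : Finset (Pt k)) (A : Matrix (Fin k) (Fin k) (ZMod 2))
    (hsum : synF S = A) (hAA : A * A = 1) : k ≤ S.card :=
  card_lower_of_span S (span_of_synF S A hsum hAA)

/-- For the alternating invertible matrix, we get the stronger bound `k+1`. -/
lemma lower_card_alt (hk : 3 ≤ k) (S : Finset (Pt k)) (A : Matrix (Fin k) (Fin k) (ZMod 2))
    (hsum : synF S = A) (hAA : A * A = 1) (hdiag : ∀ i, A i i = 0) (hA0 : A ≠ 0) :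
    k + 1 ≤ S.card := by
  have hspan := span_of_synF S A hsum hAA
  -- the vectors of S sum to zero
  have hsz : ∑ v ∈ S, v.1 = (0 : V k) := by
    funext i
    rw [Finset.sum_apply]
    have : ∑ v ∈ S, v.1 i = synF S i i := by
      rw [synF_apply]
      apply Finset.sum_congr rfl
      intro v _
      rw [z2_mul_self]
    rw [Pi.zero_apply, this, hsum, hdiag]
  have hSne : S.Nonempty := by
    rcases Finset.eq_empty_or_nonempty S with h | h
    · exfalso; apply hA0; rw [← hsum, h]; simp [synF]
    · exact h
  obtain ⟨v₀, hv₀⟩ := hSne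
  have hv₀eq : v₀.1 = ∑ v ∈ S.erase v₀, v.1 := by
    have h := Finset.add_sum_erase S (fun v : Pt k => v.1) hv₀
    rw [hsz] at h
    funext i
    have := congrFun h i
    simp only [Pi.add_apply, Pi.zero_apply, Finset.sum_apply] at this ⊢
    have hz : ∀ a b : ZMod 2, a + b = 0 → a = b := by decide
    exact hz _ _ this
  set E := (S.erase v₀).image (fun v : Pt k => v.1) with hE
  have hv₀mem : v₀.1 ∈ Submodule.span (ZMod 2) (↑E : Set (V k)) := by
    rw [hv₀eq]
    apply Submodule.sum_mem
    intro v hv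
    apply Submodule.subset_span
    simp only [hE, Finset.coe_image, Set.mem_image, Finset.mem_coe]
    exact ⟨v, hv, rfl⟩
  have hspanE : Submodule.span (ZMod 2) (↑E : Set (V k)) = ⊤ := by
    apply le_antisymm le_top
    rw [← hspan]
    apply Submodule.span_le.mpr
    intro x hx
    simp only [Finset.coe_image, Set.mem_image, Finset.mem_coe] at hx
    obtain ⟨v, hv, rfl⟩ := hx
    by_cases hvv : v = v₀
    · rw [hvv]; exact hv₀mem
    · apply Submodule.subset_span
      simp only [hE, Finset.coe_image, Set.mem_image, Finset.mem_coe]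
      exact ⟨v, Finset.mem_erase.mpr ⟨hvv, hv⟩, rfl⟩
  have h1 : Module.finrank (ZMod 2) (V k) = k := by
    rw [Module.finrank_pi]; simp
  have h2 : (↑E : Set (V k)).finrank (ZMod 2) ≤ E.card := finrank_span_finset_le_card _
  rw [Set.finrank, hspanE, finrank_top, h1] at h2
  have h3 : E.card = (S.erase v₀).card :=
    Finset.card_image_of_injective _ Subtype.val_injective
  have h4 : (S.erase v₀).card = S.card - 1 := Finset.card_erase_of_mem hv₀
  have h5 : 1 ≤ S.card := Finset.card_pos.mpr ⟨v₀, hv₀⟩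
  omega

/-- the all-ones matrix -/
def Jmat (k : ℕ) : Matrix (Fin k) (Fin k) (ZMod 2) := Matrix.of fun _ _ => 1

lemma A0even_sq (hk : 3 ≤ k) (hev : Even k) : (1 + Jmat k) * (1 + Jmat k) = 1 := by
  have hJJ : Jmat k * Jmat k = 0 := by
    ext s t
    simp only [Matrix.mul_apply, Jmat, Matrix.of_apply, one_mul, Matrix.zero_apply]
    rw [Finset.sum_const, Finset.card_univ, Fintype.card_fin, nsmul_eq_mul, mul_one]
    rw [ZMod.natCast_eq_zero_iff]
    exact hev.two_dvd
  rw [add_mul, one_mul, mul_add, mul_one, hJJ, add_zero, add_assoc, mat_add_self, add_zero]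

/-! ## The syndrome of a function and the Reed-Muller code -/

def syn (u : Pt k → ZMod 2) : Matrix (Fin k) (Fin k) (ZMod 2) :=
  Matrix.of fun i j => ∑ v : Pt k, u v * (v.1 i * v.1 j)

lemma syn_symm (u : Pt k → ZMod 2) (i j : Fin k) : syn u i j = syn u j i := by
  simp only [syn, Matrix.of_apply]
  apply Finset.sum_congr rfl
  intro v _; ring

lemma syn_indicator (S : Finset (Pt k)) :
    syn (fun v => if v ∈ S then (1 : ZMod 2) else 0) = synF S := by
  ext i j
  simp only [syn, Matrix.of_apply, synF_apply, ite_mul, one_mul, zero_mul]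
  rw [Finset.sum_ite_mem, Finset.univ_inter]

lemma syn_add (u w : Pt k → ZMod 2) : syn (fun v => u v + w v) = syn u + syn w := by
  ext i j
  simp only [syn, Matrix.of_apply, Matrix.add_apply, ← Finset.sum_add_distrib]
  apply Finset.sum_congr rfl
  intro v _; ring

lemma sum_pt (g : V k → ZMod 2) (h0 : g 0 = 0) :
    ∑ v : Pt k, g v.1 = ∑ v : V k, g v := by
  rw [← Finset.sum_subtype (univ.filter (fun v : V k => v ≠ 0)) (fun x => by simp) g]
  exact Finset.sum_subset (filter_subset _ _) (fun x _ hx => by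
    simp only [mem_filter, mem_univ, true_and, not_not] at hx
    rw [hx, h0])

lemma eval_sum_zero (f : MvPolynomial (Fin k) (ZMod 2)) (h : f.totalDegree < k) :
    ∑ v : V k, MvPolynomial.eval v f = 0 := by
  apply MvPolynomial.sum_eval_eq_zero; simpa using h

open MvPolynomial in
lemma syn_entry_eval_zero (hk : 3 ≤ k) (f : MvPolynomial (Fin k) (ZMod 2))
    (hf : f.totalDegree ≤ k - 3) (i j : Fin k) :
    ∑ v : Pt k, MvPolynomial.eval v.1 f * (v.1 i * v.1 j) = 0 := by
  have h1 : ∑ v : Pt k, MvPolynomial.eval v.1 f * (v.1 i * v.1 j)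
      = ∑ v : V k, MvPolynomial.eval v (f * X i * X j) := by
    rw [sum_pt (fun v => MvPolynomial.eval v f * (v i * v j)) (by simp)]
    simp [mul_assoc]
  rw [h1]
  apply eval_sum_zero
  calc (f * X i * X j).totalDegree
      ≤ (f * X i).totalDegree + (X j : MvPolynomial (Fin k) (ZMod 2)).totalDegree :=
        totalDegree_mul _ _
    _ ≤ f.totalDegree + (X i : MvPolynomial (Fin k) (ZMod 2)).totalDegree
          + (X j : MvPolynomial (Fin k) (ZMod 2)).totalDegree :=
        Nat.add_le_add_right (totalDegree_mul _ _) _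
    _ ≤ (k - 3) + 1 + 1 := by simp [totalDegree_X]; omega
    _ < k := by omega

lemma sum_pt_erase (g : V k → ZMod 2) :
    ∑ v ∈ (univ.erase (0 : V k)), g v = ∑ v : Pt k, g v.1 :=
  Finset.sum_subtype _ (fun x => by simp) g

lemma sum_split (g : V k → ZMod 2) :
    ∑ v : V k, g v = g 0 + ∑ v : Pt k, g v.1 := by
  rw [← sum_pt_erase, ← Finset.add_sum_erase univ g (mem_univ 0)]

open MvPolynomial in
lemma exists_poly_of_syn_zero (hk : 3 ≤ k) (w : Pt k → ZMod 2)
    (hsyn : ∀ i j : Fin k, ∑ v : Pt k, w v * (v.1 i * v.1 j) = 0) :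
    ∃ f : MvPolynomial (Fin k) (ZMod 2), f.totalDegree ≤ k - 3 ∧
      ∀ v : Pt k, w v = MvPolynomial.eval v.1 f := by
  classical
  set W : V k → ZMod 2 := fun x => if h : x = 0 then ∑ v : Pt k, w v else w ⟨x, h⟩ with hW
  have hWv : ∀ v : Pt k, W v.1 = w v := by
    rintro ⟨v, hv⟩; simp [hW, hv]
  have hW0 : W 0 = ∑ v : Pt k, w v := by simp [hW]
  have T0 : ∑ v : V k, W v = 0 := by
    rw [sum_split, hW0]
    rw [Finset.sum_congr rfl (fun v _ => hWv v)]
    exact z2_add_self _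
  have T1 : ∀ i : Fin k, ∑ v : V k, W v * v i = 0 := by
    intro i
    rw [sum_split (fun v => W v * v i)]
    simp only [Pi.zero_apply, mul_zero, zero_add]
    rw [Finset.sum_congr rfl (fun v _ => by rw [hWv v])]
    have := hsyn i i
    simpa [z2_mul_self] using this
  have T2 : ∀ i j : Fin k, ∑ v : V k, W v * (v i * v j) = 0 := by
    intro i j
    rw [sum_split (fun v => W v * (v i * v j))]
    simp only [Pi.zero_apply, mul_zero, zero_mul, zero_add]
    rw [Finset.sum_congr rfl (fun v _ => by rw [hWv v])]
    exact hsyn i j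
  set cA : Finset (Fin k) → ZMod 2 :=
    fun A => ∑ v : V k, W v * ∏ i ∈ univ \ A, (1 + v i) with hcA_def
  have hcA : ∀ A : Finset (Fin k), (univ \ A).card ≤ 2 → cA A = 0 := by
    intro A hA
    interval_cases h : (univ \ A).card
    · obtain hB := Finset.card_eq_zero.mp h
      simp only [hcA_def, hB, Finset.prod_empty, mul_one]
      exact T0
    · obtain ⟨i, hB⟩ := Finset.card_eq_one.mp h
      simp only [hcA_def, hB, Finset.prod_singleton]
      have : ∀ v : V k, W v * (1 + v i) = W v + W v * v i := by intro v; ring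
      rw [Finset.sum_congr rfl (fun v _ => this v), Finset.sum_add_distrib, T0, T1, add_zero]
    · obtain ⟨i, j, hij, hB⟩ := Finset.card_eq_two.mp h
      simp only [hcA_def, hB]
      have : ∀ v : V k, W v * ∏ s ∈ ({i, j} : Finset (Fin k)), (1 + v s)
          = W v + (W v * v i + (W v * v j + W v * (v i * v j))) := by
        intro v; rw [Finset.prod_pair hij]; ring
      rw [Finset.sum_congr rfl (fun v _ => this v)]
      rw [Finset.sum_add_distrib, Finset.sum_add_distrib, Finset.sum_add_distrib]
      rw [T0, T1, T1, T2]
      simp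
  refine ⟨∑ A ∈ (univ : Finset (Fin k)).powerset, C (cA A) * ∏ i ∈ A, X i, ?_, ?_⟩
  · apply totalDegree_finsetSum_le
    intro A _
    by_cases hA : A.card ≤ k - 3
    · refine (totalDegree_mul _ _).trans ?_
      rw [totalDegree_C, zero_add]
      refine (totalDegree_finset_prod _ _).trans ?_
      calc ∑ i ∈ A, (X i : MvPolynomial (Fin k) (ZMod 2)).totalDegree
          = A.card := by simp [totalDegree_X]
        _ ≤ k - 3 := hA
    · have hcard : A.card ≤ k := by
        simpa using Finset.card_le_card (Finset.subset_univ A)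
      have : (univ \ A).card ≤ 2 := by
        rw [Finset.card_sdiff_of_subset (Finset.subset_univ A)]
        simp only [Finset.card_univ, Fintype.card_fin]
        omega
      rw [hcA A this]
      simp
  · intro v
    rw [← hWv v]
    generalize v.1 = x
    have heval : MvPolynomial.eval x
          (∑ A ∈ (univ : Finset (Fin k)).powerset, C (cA A) * ∏ i ∈ A, X i)
        = ∑ A ∈ (univ : Finset (Fin k)).powerset, cA A * ∏ i ∈ A, x i := by
      rw [map_sum]
      exact Finset.sum_congr rfl (fun A _ => by simp)
    rw [heval]
    have hswap : ∑ A ∈ (univ : Finset (Fin k)).powerset, cA A * ∏ i ∈ A, x i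
        = ∑ u : V k, W u * ∑ A ∈ (univ : Finset (Fin k)).powerset,
            (∏ i ∈ A, x i) * ∏ i ∈ univ \ A, (1 + u i) := by
      simp only [hcA_def, Finset.sum_mul, Finset.mul_sum]
      rw [Finset.sum_comm]
      apply Finset.sum_congr rfl; intro u _
      apply Finset.sum_congr rfl; intro A _
      ring
    rw [hswap]
    have hprod : ∀ u : V k, ∑ A ∈ (univ : Finset (Fin k)).powerset,
        (∏ i ∈ A, x i) * ∏ i ∈ univ \ A, (1 + u i) = ∏ i : Fin k, (x i + (1 + u i)) := by
      intro u; rw [Finset.prod_add]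
    have hdelta : ∀ u : V k, ∏ i : Fin k, (x i + (1 + u i)) = if u = x then 1 else 0 := by
      intro u
      by_cases h : u = x
      · rw [if_pos h, h]
        apply Finset.prod_eq_one
        intro i _
        have : ∀ a : ZMod 2, a + (1 + a) = 1 := by decide
        exact this (x i)
      · rw [if_neg h]
        obtain ⟨i, hi⟩ : ∃ i, u i ≠ x i := by
          by_contra hc; push_neg at hc; exact h (funext hc)
        apply Finset.prod_eq_zero (Finset.mem_univ i)
        revert hi
        have : ∀ a b : ZMod 2, a ≠ b → b + (1 + a) = 0 := by decide
        exact this (u i) (x i)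
    rw [Finset.sum_congr rfl (fun u _ => by rw [hprod u, hdelta u])]
    simp

/-! ## The code and the distance-set reduction -/

def Code (k : ℕ) : Set (Pt k → ZMod 2) :=
  {w | ∃ f : MvPolynomial (Fin k) (ZMod 2), f.totalDegree ≤ k - 3 ∧
    ∀ v : Pt k, w v = MvPolynomial.eval v.1 f}

lemma syn_code_zero (hk : 3 ≤ k) {w : Pt k → ZMod 2} (hw : w ∈ Code k) : syn w = 0 := by
  obtain ⟨f, hf, hwf⟩ := hw
  ext i j
  simp only [syn, Matrix.of_apply, Matrix.zero_apply]
  rw [Finset.sum_congr rfl (fun v _ => by rw [hwf v])]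
  exact syn_entry_eval_zero hk f hf i j

lemma mem_code (hk : 3 ≤ k) (w : Pt k → ZMod 2) (h : syn w = 0) : w ∈ Code k := by
  apply exists_poly_of_syn_zero hk w
  intro i j
  exact congrFun (congrFun h i) j

lemma hammingDist_eq_card (u w : Pt k → ZMod 2) :
    hammingDist u w = (univ.filter fun v => u v ≠ w v).card := rfl

lemma dist_set_eq (hk : 3 ≤ k) (u : Pt k → ZMod 2) :
    {d : ℕ | ∃ w ∈ Code k, d = hammingDist u w}
      = {d : ℕ | ∃ S : Finset (Pt k), synF S = syn u ∧ d = S.card} := by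
  ext d
  simp only [Set.mem_setOf_eq]
  constructor
  · rintro ⟨w, hw, rfl⟩
    refine ⟨Finset.univ.filter (fun v => u v ≠ w v), ?_, hammingDist_eq_card u w⟩
    ext i j
    rw [synF_apply, Finset.sum_filter]
    have hsw : syn w = 0 := syn_code_zero hk hw
    have h2 : ∀ v : Pt k, (if u v ≠ w v then v.1 i * v.1 j else 0)
        = (u v + w v) * (v.1 i * v.1 j) := by
      intro v
      by_cases h : u v ≠ w v
      · rw [if_pos h]
        have h1 : u v + w v = 1 := by
          revert h; generalize u v = a; generalize w v = b; revert a b; decide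
        rw [h1, one_mul]
      · rw [if_neg h]
        push_neg at h
        rw [h, z2_add_self, zero_mul]
    rw [Finset.sum_congr rfl (fun v _ => h2 v)]
    have h3 : ∑ v : Pt k, (u v + w v) * (v.1 i * v.1 j) = syn u i j + syn w i j := by
      simp only [syn, Matrix.of_apply, ← Finset.sum_add_distrib]
      apply Finset.sum_congr rfl
      intro v _; ring
    rw [h3, hsw]
    simp
  · rintro ⟨S, hS, rfl⟩
    set w : Pt k → ZMod 2 := fun v => u v + (if v ∈ S then 1 else 0) with hwdef
    have hsynw : syn w = 0 := by
      have : syn w = syn u + synF S := by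
        rw [hwdef, syn_add, syn_indicator]
      rw [this, hS]
      exact mat_add_self _
    refine ⟨w, mem_code hk w hsynw, ?_⟩
    rw [hammingDist_eq_card]
    congr 1
    ext v
    simp only [Finset.mem_filter, Finset.mem_univ, true_and, hwdef]
    have hne : ∀ a : ZMod 2, a ≠ a + 1 := by decide
    by_cases h : v ∈ S
    · rw [if_pos h]
      exact iff_of_true h (hne _)
    · rw [if_neg h]
      exact iff_of_false h (by simp)

/-! ## Final assembly -/

lemma upper_all (hk : 3 ≤ k) (u : Pt k → ZMod 2) :
    sInf {d : ℕ | ∃ w ∈ Code k, d = hammingDist u w} ≤ (if Even k then k + 1 else k) := by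
  rw [dist_set_eq hk u]
  obtain ⟨S, hS, hcard⟩ := upper_bound (syn u) (syn_symm u)
  exact le_trans (Nat.sInf_le ⟨S, hS, rfl⟩) hcard

lemma exists_extremal (hk : 3 ≤ k) :
    ∃ u : Pt k → ZMod 2,
      sInf {d : ℕ | ∃ w ∈ Code k, d = hammingDist u w} = (if Even k then k + 1 else k) := by
  by_cases hev : Even k
  · -- even case : use A₀ = 1 + J
    set A₀ : Matrix (Fin k) (Fin k) (ZMod 2) := 1 + Jmat k with hA₀
    have hsymA : ∀ i j, A₀ i j = A₀ j i := by
      intro i j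
      simp only [hA₀, Matrix.add_apply, Jmat, Matrix.of_apply]
      by_cases h : i = j
      · rw [h]
      · rw [Matrix.one_apply_ne h, Matrix.one_apply_ne (Ne.symm h)]
    have hAA : A₀ * A₀ = 1 := A0even_sq hk hev
    have hdiag : ∀ i, A₀ i i = 0 := by
      intro i
      simp only [hA₀, Matrix.add_apply, Jmat, Matrix.of_apply, Matrix.one_apply_eq]
      decide
    have hA0 : A₀ ≠ 0 := by
      intro hcon
      have h01 : (⟨0, by omega⟩ : Fin k) ≠ (⟨1, by omega⟩ : Fin k) := by
        intro h
        simpa using congrArg Fin.val h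
      have hent := congrFun (congrFun hcon ⟨0, by omega⟩) ⟨1, by omega⟩
      rw [hA₀, Matrix.add_apply, Matrix.one_apply_ne h01] at hent
      simp only [Jmat, Matrix.of_apply, Matrix.zero_apply, zero_add] at hent
      exact one_ne_zero hent
    obtain ⟨S₀, hS₀, hcard₀⟩ := upper_bound A₀ hsymA
    set u₀ : Pt k → ZMod 2 := fun v => if v ∈ S₀ then 1 else 0 with hu₀
    have hsynu₀ : syn u₀ = A₀ := by rw [hu₀, syn_indicator, hS₀]
    refine ⟨u₀, ?_⟩
    rw [dist_set_eq hk u₀, if_pos hev]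
    have hmem : S₀.card ∈ {d : ℕ | ∃ S : Finset (Pt k), synF S = syn u₀ ∧ d = S.card} :=
      ⟨S₀, by rw [hS₀, hsynu₀], rfl⟩
    have hlow : ∀ d ∈ {d : ℕ | ∃ S : Finset (Pt k), synF S = syn u₀ ∧ d = S.card},
        k + 1 ≤ d := by
      rintro d ⟨S, hS, rfl⟩
      exact lower_card_alt hk S A₀ (by rw [hS, hsynu₀]) hAA hdiag hA0
    apply le_antisymm
    · refine le_trans (Nat.sInf_le hmem) ?_
      rw [if_pos hev] at hcard₀
      exact hcard₀
    · exact le_csInf ⟨S₀.card, hmem⟩ hlow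
  · -- odd case : use A₀ = 1
    set A₀ : Matrix (Fin k) (Fin k) (ZMod 2) := 1 with hA₀
    have hsymA : ∀ i j, A₀ i j = A₀ j i := by
      intro i j
      simp only [hA₀]
      by_cases h : i = j
      · rw [h]
      · rw [Matrix.one_apply_ne h, Matrix.one_apply_ne (Ne.symm h)]
    have hAA : A₀ * A₀ = 1 := by rw [hA₀, one_mul]
    obtain ⟨S₀, hS₀, hcard₀⟩ := upper_bound A₀ hsymA
    set u₀ : Pt k → ZMod 2 := fun v => if v ∈ S₀ then 1 else 0 with hu₀
    have hsynu₀ : syn u₀ = A₀ := by rw [hu₀, syn_indicator, hS₀]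
    refine ⟨u₀, ?_⟩
    rw [dist_set_eq hk u₀, if_neg hev]
    have hmem : S₀.card ∈ {d : ℕ | ∃ S : Finset (Pt k), synF S = syn u₀ ∧ d = S.card} :=
      ⟨S₀, by rw [hS₀, hsynu₀], rfl⟩
    have hlow : ∀ d ∈ {d : ℕ | ∃ S : Finset (Pt k), synF S = syn u₀ ∧ d = S.card},
        k ≤ d := by
      rintro d ⟨S, hS, rfl⟩
      exact lower_card_base S A₀ (by rw [hS, hsynu₀]) hAA
    apply le_antisymm
    · refine le_trans (Nat.sInf_le hmem) ?_
      rw [if_neg hev] at hcard₀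
      exact hcard₀
    · exact le_csInf ⟨S₀.card, hmem⟩ hlow

end RM7

/-- The covering radius of the puncture at 0 of the Reed–Muller code
R(k−3, k) equals k+1 if k is even and k if k is odd. -/
theorem stmt_7 (k : ℕ) (hk : 3 ≤ k) :
    sSup {r : ℕ | ∃ u : {v : Fin k → ZMod 2 // v ≠ 0} → ZMod 2,
        r = sInf {d : ℕ | ∃ w ∈ {w : {v : Fin k → ZMod 2 // v ≠ 0} → ZMod 2 |
              ∃ f : MvPolynomial (Fin k) (ZMod 2), f.totalDegree ≤ k - 3 ∧
                ∀ v : {v : Fin k → ZMod 2 // v ≠ 0}, w v = MvPolynomial.eval v.1 f},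
            d = hammingDist u w}} =
      if Even k then k + 1 else k := by
  apply IsGreatest.csSup_eq
  constructor
  · obtain ⟨u₀, hu₀⟩ := RM7.exists_extremal hk
    exact ⟨u₀, hu₀.symm⟩
  · rintro r ⟨u, rfl⟩
    exact RM7.upper_all hk u
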